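/- Let C be a finite category, c an object, and J a J-class of the consolidation C^cd meeting C_c. Then J is regular (contains an idempotent / all its elements are regular) if and only if J ∩ C_c is a regular J-class of C_c. Moreover, if x ∈ J ∩ C_c and x' ∈ C^cd is an inverse of x (xx'x = x and x'xx' = x'), then x' ∈ J ∩ C_c. -/

import Mathlib

/-- A finite category presented by its set of arrows with a partial composition. -/
structure FinCat (Obj : Type) where
  Arr : Type
  src : Arr → Obj
  tgt : Arr → Obj
  id : Obj → Arr
  comp : (f g : Arr) → tgt f = src g → Arr
  src_id : ∀ a, src (id a) = a
  tgt_id : ∀ a, tgt (id a) = a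
  src_comp : ∀ f g h, src (comp f g h) = src f
  tgt_comp : ∀ f g h, tgt (comp f g h) = tgt g
  id_comp : ∀ (f : Arr) (h : tgt (id (src f)) = src f), comp (id (src f)) f h = f
  comp_id : ∀ (f : Arr) (h : tgt f = src (id (tgt f))), comp f (id (tgt f)) h = f
  assoc : ∀ (f g k : Arr) (h1 : tgt f = src g) (h2 : tgt g = src k) h3 h4,
    comp (comp f g h1) k h3 = comp f (comp g k h2) h4

/-- The underlying set of the consolidation monoid `C^cd`:
arrows of `C` together with an adjoined zero and identity. -/
inductive Cd {Obj : Type} (C : FinCat Obj) where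
  | zero : Cd C
  | one : Cd C
  | arr : C.Arr → Cd C

variable {Obj : Type} [DecidableEq Obj]

/-- Multiplication of the consolidation: composition where defined, `0` otherwise,
with `1` an adjoined identity and `0` absorbing. -/
def cdMul (C : FinCat Obj) : Cd C → Cd C → Cd C
  | .one, x => x
  | .zero, _ => .zero
  | x, .one => x
  | _, .zero => .zero
  | .arr f, .arr g => if h : C.tgt f = C.src g then .arr (C.comp f g h) else .zero

theorem cdMul_zero (C : FinCat Obj) (x : Cd C) : cdMul C x Cd.zero = Cd.zero := by
  cases x <;> rfl
theorem cdZero_mul (C : FinCat Obj) (x : Cd C) : cdMul C Cd.zero x = Cd.zero := by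
  cases x <;> rfl
theorem cdMul_one (C : FinCat Obj) (x : Cd C) : cdMul C x Cd.one = x := by
  cases x <;> rfl
theorem cdOne_mul (C : FinCat Obj) (x : Cd C) : cdMul C Cd.one x = x := by
  cases x <;> rfl

theorem cdMul_assoc (C : FinCat Obj) (x y z : Cd C) :
    cdMul C (cdMul C x y) z = cdMul C x (cdMul C y z) := by
  cases x <;> cases y <;> cases z <;>
    (try simp only [cdMul_zero, cdZero_mul, cdMul_one, cdOne_mul]) <;> (try rfl)
  case arr.arr.arr f g k =>
    by_cases h1 : C.tgt f = C.src g
    · by_cases h2 : C.tgt g = C.src k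
      · show cdMul C (dite _ _ _) _ = cdMul C _ (dite _ _ _)
        rw [dif_pos h1, dif_pos h2]
        show dite _ _ _ = dite _ _ _
        rw [dif_pos (show C.tgt (C.comp f g h1) = C.src k by rw [C.tgt_comp]; exact h2),
            dif_pos (show C.tgt f = C.src (C.comp g k h2) by rw [C.src_comp]; exact h1)]
        exact congrArg Cd.arr (C.assoc f g k h1 h2 _ _)
      · show cdMul C (dite _ _ _) _ = cdMul C _ (dite _ _ _)
        rw [dif_pos h1, dif_neg h2]
        show dite _ _ _ = Cd.zero
        rw [dif_neg (show ¬ C.tgt (C.comp f g h1) = C.src k by rw [C.tgt_comp]; exact h2)]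
    · show cdMul C (dite _ _ _) _ = cdMul C _ (cdMul C _ _)
      rw [dif_neg h1]
      by_cases h2 : C.tgt g = C.src k
      · show Cd.zero = cdMul C _ (dite _ _ _)
        rw [dif_pos h2]
        show Cd.zero = dite _ _ _
        rw [dif_neg (show ¬ C.tgt f = C.src (C.comp g k h2) by rw [C.src_comp]; exact h1)]
      · show Cd.zero = cdMul C _ (dite _ _ _)
        rw [dif_neg h2, cdMul_zero]

instance cdMonoid (C : FinCat Obj) : Monoid (Cd C) where
  mul := cdMul C
  one := .one
  one_mul x := by cases x <;> rfl
  mul_one x := by cases x <;> rfl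
  mul_assoc := cdMul_assoc C

/-- Green's R-equivalence in a monoid. -/
def RE {M : Type} [Monoid M] (s t : M) : Prop := (∃ a, s * a = t) ∧ (∃ a, t * a = s)
/-- Green's L-equivalence in a monoid. -/
def LE' {M : Type} [Monoid M] (s t : M) : Prop := (∃ a, a * s = t) ∧ (∃ a, a * t = s)
/-- Green's H-equivalence in a monoid. -/
def HE {M : Type} [Monoid M] (s t : M) : Prop := RE s t ∧ LE' s t
/-- Green's J-equivalence in a monoid. -/
def JE {M : Type} [Monoid M] (s t : M) : Prop :=
  (∃ a b, a * s * b = t) ∧ (∃ a b, a * t * b = s)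

/-- Green's R-equivalence relative to a subset `S` (multipliers taken in `S`). -/
def REOn {M : Type} [Monoid M] (S : Set M) (s t : M) : Prop :=
  (∃ a ∈ S, s * a = t) ∧ (∃ a ∈ S, t * a = s)
def LEOn {M : Type} [Monoid M] (S : Set M) (s t : M) : Prop :=
  (∃ a ∈ S, a * s = t) ∧ (∃ a ∈ S, a * t = s)
def HEOn {M : Type} [Monoid M] (S : Set M) (s t : M) : Prop := REOn S s t ∧ LEOn S s t
def JEOn {M : Type} [Monoid M] (S : Set M) (s t : M) : Prop :=
  (∃ a ∈ S, ∃ b ∈ S, a * s * b = t) ∧ (∃ a ∈ S, ∃ b ∈ S, a * t * b = s)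

/-- The local monoid `C_c = C(c,c)`, viewed as a subset of the consolidation. -/
def locSet (C : FinCat Obj) (c : Obj) : Set (Cd C) :=
  {x | ∃ f : C.Arr, x = Cd.arr f ∧ C.src f = c ∧ C.tgt f = c}


section Green
variable {M : Type} [Monoid M]

theorem JE_symm' {s t : M} (h : JE s t) : JE t s := ⟨h.2, h.1⟩

theorem JE_trans' {s t u : M} (h1 : JE s t) (h2 : JE t u) : JE s u := by
  obtain ⟨⟨a, b, hab⟩, ⟨a2, b2, hab2⟩⟩ := h1
  obtain ⟨⟨p, q, hpq⟩, ⟨p2, q2, hpq2⟩⟩ := h2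
  constructor
  · exact ⟨p * a, b * q, by rw [← hpq, ← hab]; simp [mul_assoc]⟩
  · exact ⟨a2 * p2, q2 * b2, by rw [← hab2, ← hpq2]; simp [mul_assoc]⟩

theorem exists_pow_idem [Finite M] (p : M) : ∃ n, 1 ≤ n ∧ p ^ n * p ^ n = p ^ n := by
  obtain ⟨i, j, hij, hpow⟩ := Finite.exists_ne_map_eq_of_infinite (fun n : ℕ => p ^ (n + 1))
  have key : ∃ b d : ℕ, 1 ≤ b ∧ 1 ≤ d ∧ p ^ (b + d) = p ^ b := by
    rcases Nat.lt_or_ge i j with h | h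
    · exact ⟨i + 1, j - i, by omega, by omega, by
        rw [show i + 1 + (j - i) = j + 1 by omega]; exact hpow.symm⟩
    · have h' : j < i := by omega
      exact ⟨j + 1, i - j, by omega, by omega, by
        rw [show j + 1 + (i - j) = i + 1 by omega]; exact hpow⟩
  obtain ⟨b, d, hb, hd, hkey⟩ := key
  have step : ∀ m, b ≤ m → p ^ (m + d) = p ^ m := by
    intro m hm
    have h1 : m + d = (b + d) + (m - b) := by omega
    rw [h1, pow_add, hkey, ← pow_add, show b + (m - b) = m by omega]
  have multi : ∀ k m, b ≤ m → p ^ (m + k * d) = p ^ m := by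
    intro k
    induction k with
    | zero => intro m hm; simp
    | succ k ih =>
      intro m hm
      rw [show m + (k + 1) * d = (m + k * d) + d by ring, step (m + k * d) (by omega),
        ih m hm]
  refine ⟨b * d, by nlinarith, ?_⟩
  rw [← pow_add]
  exact multi b (b * d) (by nlinarith)

theorem sandwich_iter {y b q : M} (h : y = b * y * q) : ∀ n, y = b ^ n * y * q ^ n := by
  intro n
  induction n with
  | zero => simp
  | succ n ih =>
    calc y = b * y * q := h
    _ = b * (b ^ n * y * q ^ n) * q := by rw [← ih]
    _ = (b * b ^ n) * y * (q ^ n * q) := by simp [mul_assoc]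
    _ = b ^ (n + 1) * y * q ^ (n + 1) := by rw [← pow_succ', ← pow_succ]

theorem lemR [Finite M] {x y a b cc : M} (h1 : x = y * a) (h2 : y = b * x * cc) :
    ∃ t, x * t = y := by
  have hy : y = b * y * (a * cc) := by
    calc y = b * x * cc := h2
    _ = b * (y * a) * cc := by rw [h1]
    _ = b * y * (a * cc) := by simp [mul_assoc]
  obtain ⟨n, hn, hidem⟩ := exists_pow_idem (a * cc)
  have hyn := sandwich_iter hy n
  have hfix : y * (a * cc) ^ n = y := by
    calc y * (a * cc) ^ n = b ^ n * y * (a * cc) ^ n * (a * cc) ^ n := by rw [← hyn]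
    _ = b ^ n * y * ((a * cc) ^ n * (a * cc) ^ n) := by simp [mul_assoc]
    _ = b ^ n * y * (a * cc) ^ n := by rw [hidem]
    _ = y := hyn.symm
  obtain ⟨m, rfl⟩ : ∃ m, n = m + 1 := ⟨n - 1, by omega⟩
  refine ⟨cc * (a * cc) ^ m, ?_⟩
  calc x * (cc * (a * cc) ^ m) = y * ((a * cc) * (a * cc) ^ m) := by
        rw [h1]; simp [mul_assoc]
  _ = y * (a * cc) ^ (m + 1) := by rw [pow_succ']
  _ = y := hfix

theorem lemL [Finite M] {x y a b cc : M} (h1 : x = a * y) (h2 : y = b * x * cc) :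
    ∃ t, t * x = y := by
  have hy : y = (b * a) * y * cc := by
    calc y = b * x * cc := h2
    _ = b * (a * y) * cc := by rw [h1]
    _ = (b * a) * y * cc := by simp [mul_assoc]
  obtain ⟨n, hn, hidem⟩ := exists_pow_idem (b * a)
  have hyn := sandwich_iter hy n
  have hfix : (b * a) ^ n * y = y := by
    calc (b * a) ^ n * y = (b * a) ^ n * ((b * a) ^ n * y * cc ^ n) := by rw [← hyn]
    _ = ((b * a) ^ n * (b * a) ^ n) * y * cc ^ n := by simp [mul_assoc]
    _ = (b * a) ^ n * y * cc ^ n := by rw [hidem]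
    _ = y := hyn.symm
  obtain ⟨m, rfl⟩ : ∃ m, n = m + 1 := ⟨n - 1, by omega⟩
  refine ⟨(b * a) ^ m * b, ?_⟩
  calc ((b * a) ^ m * b) * x = (b * a) ^ m * (b * a) * y := by rw [h1]; simp [mul_assoc]
  _ = (b * a) ^ (m + 1) * y := by rw [pow_succ]
  _ = y := hfix

/-- In a finite monoid, an element J-equivalent to a regular element is regular. -/
theorem reg_spread [Finite M] {s s' x : M} (hs : s * s' * s = s) (hxs : JE x s) :
    ∃ m, x * m * x = x := by
  obtain ⟨⟨a, b, hab⟩, ⟨a2, b2, hab2⟩⟩ := hxs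
  have F3 : (s * s') * (s * s') = s * s' := by
    calc (s * s') * (s * s') = (s * s' * s) * s' := by simp [mul_assoc]
    _ = s * s' := by rw [hs]
  set d := b * s' with hd
  have F1 : a * (x * d) = s * s' := by
    rw [hd, ← hab]; simp [mul_assoc]
  have F2 : x = a2 * (s * s') * (s * b2) := by
    calc x = a2 * s * b2 := hab2.symm
    _ = a2 * ((s * s' * s) * b2) := by rw [hs]; simp [mul_assoc]
    _ = a2 * (s * s') * (s * b2) := by simp [mul_assoc]
  have G2 : x * d = a2 * (s * s') * ((s * b2) * d) := by
    rw [F2]; simp [mul_assoc]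
  obtain ⟨p, hp⟩ := lemL F1.symm G2
  have hye : (x * d) * (s * s') = x * d := by
    calc (x * d) * (s * s') = p * (s * s') * (s * s') := by rw [← hp]
    _ = p * ((s * s') * (s * s')) := by simp [mul_assoc]
    _ = p * (s * s') := by rw [F3]
    _ = x * d := hp
  have hx2 : x = (a2 * a) * (x * d) * (s * b2) := by
    calc x = a2 * (s * s') * (s * b2) := F2
    _ = a2 * (a * (x * d)) * (s * b2) := by rw [F1]
    _ = (a2 * a) * (x * d) * (s * b2) := by simp [mul_assoc]
  obtain ⟨r, hr⟩ := lemR (rfl : x * d = x * d) hx2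
  refine ⟨d * a, ?_⟩
  calc x * (d * a) * x = x * (d * a) * ((x * d) * r) := by rw [hr]
  _ = ((x * d) * (a * (x * d))) * r := by simp [mul_assoc]
  _ = ((x * d) * (s * s')) * r := by rw [F1]
  _ = (x * d) * r := by rw [hye]
  _ = x := hr

end Green


instance cdFinite (C : FinCat Obj) [Fintype C.Arr] : Finite (Cd C) := by
  haveI : Finite (Option (Option C.Arr)) := Finite.of_fintype _
  apply Finite.of_injective (fun x : Cd C => match x with
    | .zero => (none : Option (Option C.Arr))
    | .one => some none
    | .arr a => some (some a))
  rintro ⟨⟩ ⟨⟩ h <;> simp_all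

theorem cd_mul_eq (C : FinCat Obj) (x y : Cd C) : x * y = cdMul C x y := rfl

/-- inverses of elements of `J ∩ C_c` stay in `J ∩ C_c`. -/
theorem inv_mem (C : FinCat Obj) [Fintype C.Arr] {c : Obj} {J : Set (Cd C)} {w : Cd C}
    (hJw : J = {z | JE z w}) {x : Cd C} (hxJ : x ∈ J) (hxl : x ∈ locSet C c)
    (x' : Cd C) (h1 : x * x' * x = x) (h2 : x' * x * x' = x') : x' ∈ J ∩ locSet C c := by
  obtain ⟨f, rfl, hsrc, htgt⟩ := hxl
  have hJmem : x' ∈ J := by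
    rw [hJw]
    have hJx : JE x' (Cd.arr f) := ⟨⟨Cd.arr f, Cd.arr f, h1⟩, ⟨x', x', h2⟩⟩
    have hxw : JE (Cd.arr f) w := by rw [hJw] at hxJ; exact hxJ
    exact JE_trans' hJx hxw
  refine ⟨hJmem, ?_⟩
  cases x' with
  | zero =>
    exfalso
    rw [cd_mul_eq, cd_mul_eq, cdMul_zero, cdZero_mul] at h1
    cases h1
  | one =>
    exfalso
    have : (Cd.one : Cd C) * Cd.arr f * Cd.one = Cd.arr f := by
      rw [cd_mul_eq, cd_mul_eq, cdOne_mul, cdMul_one]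
    rw [this] at h2
    cases h2
  | arr g =>
    by_cases hfg : C.tgt f = C.src g
    · have hstep : Cd.arr f * Cd.arr g = Cd.arr (C.comp f g hfg) := by
        rw [cd_mul_eq]; show dite _ _ _ = _; rw [dif_pos hfg]
      rw [hstep] at h1
      by_cases hgf : C.tgt (C.comp f g hfg) = C.src f
      · have hgf' : C.tgt g = C.src f := by rw [← C.tgt_comp f g hfg]; exact hgf
        exact ⟨g, rfl, by rw [← hfg, htgt], by rw [hgf', hsrc]⟩
      · exfalso
        have : Cd.arr (C.comp f g hfg) * Cd.arr f = Cd.zero := by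
          rw [cd_mul_eq]; show dite _ _ _ = _; rw [dif_neg hgf]
        rw [this] at h1
        cases h1
    · exfalso
      have : Cd.arr f * Cd.arr g = Cd.zero := by
        rw [cd_mul_eq]; show dite _ _ _ = _; rw [dif_neg hfg]
      rw [this, cd_mul_eq, cdZero_mul] at h1
      cases h1

/-- a J-class `J` of `C^cd` meeting `C_c` is regular iff `J ∩ C_c` is a
regular J-class of `C_c`; moreover any inverse of an element of `J ∩ C_c` lies in `J ∩ C_c`. -/
theorem stmt_10 (C : FinCat Obj) [Fintype Obj] [Fintype C.Arr] (c : Obj)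
    (J : Set (Cd C)) (hJ : ∃ w : Cd C, J = {z | JE z w})
    (hmeet : (J ∩ locSet C c).Nonempty) :
    ((∃ z ∈ J, ∃ z' : Cd C, z * z' * z = z) ↔
      (∃ z ∈ J ∩ locSet C c, ∃ z' ∈ locSet C c, z * z' * z = z)) ∧
    (∀ x ∈ J ∩ locSet C c, ∀ x' : Cd C,
      x * x' * x = x → x' * x * x' = x' → x' ∈ J ∩ locSet C c) := by
  obtain ⟨w, hJw⟩ := hJ
  obtain ⟨x, hxJ, hxloc⟩ := hmeet
  constructor
  · constructor
    · rintro ⟨z, hzJ, z', hz⟩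
      have hxw : JE x w := by rw [hJw] at hxJ; exact hxJ
      have hzw : JE z w := by rw [hJw] at hzJ; exact hzJ
      have hJExz : JE x z := JE_trans' hxw (JE_symm' hzw)
      obtain ⟨m, hm⟩ := reg_spread hz hJExz
      have e1 : x * (m * x * m) * x = x := by
        calc x * (m * x * m) * x = (x * m * x) * (m * x) := by simp [mul_assoc]
        _ = x * (m * x) := by rw [hm]
        _ = x * m * x := by rw [mul_assoc]
        _ = x := hm
      have e2 : (m * x * m) * x * (m * x * m) = m * x * m := by
        calc (m * x * m) * x * (m * x * m) = m * ((x * m * x) * (m * (x * m))) := by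
              simp [mul_assoc]
        _ = m * (x * (m * (x * m))) := by rw [hm]
        _ = m * ((x * m * x) * m) := by simp [mul_assoc]
        _ = m * (x * m) := by rw [hm]
        _ = m * x * m := by rw [mul_assoc]
      have hmem := inv_mem C hJw hxJ hxloc (m * x * m) e1 e2
      exact ⟨x, ⟨hxJ, hxloc⟩, m * x * m, hmem.2, e1⟩
    · rintro ⟨z, ⟨hzJ, _⟩, z', _, hz⟩
      exact ⟨z, hzJ, z', hz⟩
  · intro y hy y' hy1 hy2
    exact inv_mem C hJw hy.1 hy.2 y' hy1 hy2
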